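/- arXiv:1206.1211 — 3 statements merged into one kernel-verified Lean document; each statement's English description precedes it below -/
import Mathlib

section
/- There exists a unique formal power series f(z) = z + a_2 z^2 + a_3 z^3 + ... satisfying the functional equation f(\lambda z) = P(f(z)), where P is a polynomial with P(0) = 0 and P'(0) = \lambda, provided \lambda is not a root of unity and \lambda^n \neq \lambda for all n \geq 2. -/
open PowerSeries Polynomial Finset

private lemma coeff_pow_lt_zero (f : PowerSeries ℂ) (hf : PowerSeries.coeff 0 f = 0) :
    ∀ m n : ℕ, n < m → PowerSeries.coeff n (f ^ m) = 0 := by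
  intro m
  induction m with
  | zero => intro n hn; omega
  | succ m ih =>
    intro n hn
    rw [pow_succ, PowerSeries.coeff_mul]
    apply Finset.sum_eq_zero
    intro p hp
    rw [Finset.HasAntidiagonal.mem_antidiagonal] at hp
    rcases Nat.eq_zero_or_pos p.2 with h2 | h2
    · rw [h2, hf, mul_zero]
    · rw [ih p.1 (by omega), zero_mul]

private lemma coeff_pow_congr (f g : PowerSeries ℂ)
    (hf : PowerSeries.coeff 0 f = 0) (hg : PowerSeries.coeff 0 g = 0)
    (n : ℕ) (h : ∀ k < n, PowerSeries.coeff k f = PowerSeries.coeff k g)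
    (m : ℕ) (hm : 2 ≤ m) :
    PowerSeries.coeff n (f ^ m) = PowerSeries.coeff n (g ^ m) := by
  have key := geom_sum₂_mul f g m
  have h0 : PowerSeries.coeff n ((∑ i ∈ range m, f ^ i * g ^ (m - 1 - i)) * (f - g)) = 0 := by
    rw [PowerSeries.coeff_mul]
    apply Finset.sum_eq_zero
    intro p hp
    rw [Finset.HasAntidiagonal.mem_antidiagonal] at hp
    rcases lt_or_ge p.2 n with h2 | h2
    · rw [map_sub, h p.2 h2, sub_self, mul_zero]
    · have hp1 : p.1 = 0 := by omega
      have : PowerSeries.coeff p.1 (∑ i ∈ range m, f ^ i * g ^ (m - 1 - i)) = 0 := by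
        rw [hp1, map_sum]
        apply Finset.sum_eq_zero
        intro i hi
        rw [Finset.mem_range] at hi
        rcases Nat.eq_zero_or_pos i with h3 | h3
        · rw [h3]
          simp only [pow_zero, one_mul]
          exact coeff_pow_lt_zero g hg (m - 1 - 0) 0 (by omega)
        · rw [PowerSeries.coeff_mul]
          apply Finset.sum_eq_zero
          intro q hq
          rw [Finset.HasAntidiagonal.mem_antidiagonal] at hq
          have hq1 : q.1 = 0 := by omega
          rw [hq1, coeff_pow_lt_zero f hf i 0 h3, zero_mul]
      rw [this, zero_mul]
  rw [key, map_sub, sub_eq_zero] at h0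
  exact h0

private lemma coeff_aeval_eq (P : Polynomial ℂ) (f : PowerSeries ℂ) (n : ℕ) :
    PowerSeries.coeff n (Polynomial.aeval f P)
      = ∑ i ∈ range (P.natDegree + 1), P.coeff i * PowerSeries.coeff n (f ^ i) := by
  rw [Polynomial.aeval_eq_sum_range, map_sum]
  refine Finset.sum_congr rfl fun i _ => ?_
  rw [map_smul, smul_eq_mul]

private lemma key_diff (P : Polynomial ℂ) (lam : ℂ) (hP1 : P.coeff 1 = lam)
    (f g : PowerSeries ℂ)
    (hf : PowerSeries.coeff 0 f = 0) (hg : PowerSeries.coeff 0 g = 0)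
    (n : ℕ) (hn : 2 ≤ n)
    (h : ∀ k < n, PowerSeries.coeff k f = PowerSeries.coeff k g) :
    PowerSeries.coeff n (Polynomial.aeval f P) - lam * PowerSeries.coeff n f
      = PowerSeries.coeff n (Polynomial.aeval g P) - lam * PowerSeries.coeff n g := by
  rw [coeff_aeval_eq, coeff_aeval_eq]
  have hsum : ∑ i ∈ range (P.natDegree + 1),
      P.coeff i * (PowerSeries.coeff n (f ^ i) - PowerSeries.coeff n (g ^ i))
      = P.coeff 1 * (PowerSeries.coeff n f - PowerSeries.coeff n g) := by
    rw [Finset.sum_eq_single 1]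
    · rw [pow_one, pow_one]
    · intro i _ hi1
      rcases Nat.eq_zero_or_pos i with h0 | h0
      · rw [h0, pow_zero, pow_zero, sub_self, mul_zero]
      · have : 2 ≤ i := by omega
        rw [coeff_pow_congr f g hf hg n h i this, sub_self, mul_zero]
    · intro h1
      rw [Finset.mem_range, not_lt] at h1
      rw [Polynomial.coeff_eq_zero_of_natDegree_lt (by omega), zero_mul]
  rw [hP1] at hsum
  have expand : ∑ i ∈ range (P.natDegree + 1),
      P.coeff i * (PowerSeries.coeff n (f ^ i) - PowerSeries.coeff n (g ^ i))
      = (∑ i ∈ range (P.natDegree + 1), P.coeff i * PowerSeries.coeff n (f ^ i))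
        - ∑ i ∈ range (P.natDegree + 1), P.coeff i * PowerSeries.coeff n (g ^ i) := by
    rw [← Finset.sum_sub_distrib]
    exact Finset.sum_congr rfl fun i _ => by ring
  rw [expand] at hsum
  linear_combination hsum

noncomputable def poincareCoef (P : Polynomial ℂ) (lam : ℂ) : ℕ → ℂ
  | 0 => 0
  | 1 => 1
  | n + 2 =>
      (PowerSeries.coeff (n + 2) (Polynomial.aeval
        (PowerSeries.mk fun k => if _ : k < n + 2 then poincareCoef P lam k else 0) P))
        / (lam ^ (n + 2) - lam)

/-- There is a unique formal power series `f = z + a₂ z² + ⋯` satisfying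
`f(λ z) = P(f(z))`, where `P` is a polynomial with `P(0) = 0` and `P'(0) = λ`,
provided `λ^n ≠ λ` for all `n ≥ 2`. -/
theorem poincare_formal_power_series (P : Polynomial ℂ) (lam : ℂ)
    (hP0 : P.coeff 0 = 0) (hP1 : P.coeff 1 = lam)
    (hlam : ∀ n : ℕ, 2 ≤ n → lam ^ n ≠ lam) :
    ∃! f : PowerSeries ℂ,
      PowerSeries.coeff 0 f = 0 ∧ PowerSeries.coeff 1 f = 1 ∧
      PowerSeries.rescale lam f = Polynomial.aeval f P := by
  set a : ℕ → ℂ := poincareCoef P lam with ha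
  set f : PowerSeries ℂ := PowerSeries.mk a with hff
  have hcoef : ∀ n, PowerSeries.coeff n f = a n := fun n => PowerSeries.coeff_mk n a
  have ha0 : a 0 = 0 := by rw [ha, poincareCoef]
  have ha1 : a 1 = 1 := by rw [ha, poincareCoef]
  have hf0 : PowerSeries.coeff 0 f = 0 := by rw [hcoef, ha0]
  have hf1 : PowerSeries.coeff 1 f = 1 := by rw [hcoef, ha1]
  -- the functional equation for f
  have hfeq : ∀ n : ℕ, lam ^ n * PowerSeries.coeff n f
      = PowerSeries.coeff n (Polynomial.aeval f P) := by
    intro n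
    match n with
    | 0 =>
      rw [hf0, mul_zero, coeff_aeval_eq]
      symm
      apply Finset.sum_eq_zero
      intro i _
      rcases Nat.eq_zero_or_pos i with h0 | h0
      · rw [h0, pow_zero]
        simp [hP0]
      · rw [coeff_pow_lt_zero f hf0 i 0 h0, mul_zero]
    | 1 =>
      rw [hf1, mul_one, pow_one, coeff_aeval_eq]
      symm
      rw [Finset.sum_eq_single 1]
      · rw [pow_one, hf1, mul_one, hP1]
      · intro i _ hi1
        rcases Nat.eq_zero_or_pos i with h0 | h0
        · rw [h0, pow_zero]
          simp
        · have : 2 ≤ i := by omega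
          rw [coeff_pow_lt_zero f hf0 i 1 (by omega), mul_zero]
      · intro h1
        rw [Finset.mem_range, not_lt] at h1
        rw [Polynomial.coeff_eq_zero_of_natDegree_lt (by omega), zero_mul]
    | (n + 2) =>
      set g : PowerSeries ℂ :=
        PowerSeries.mk (fun k => if _ : k < n + 2 then poincareCoef P lam k else 0) with hgg
      have hg : ∀ k, PowerSeries.coeff k g
          = if _ : k < n + 2 then poincareCoef P lam k else 0 := fun k =>
        PowerSeries.coeff_mk k _
      have hg0 : PowerSeries.coeff 0 g = 0 := by
        rw [hg]; simp [poincareCoef]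
      have hgn : PowerSeries.coeff (n + 2) g = 0 := by
        rw [hg]; simp
      have hagree : ∀ k < n + 2, PowerSeries.coeff k f = PowerSeries.coeff k g := by
        intro k hk
        rw [hcoef, hg, dif_pos hk]
      have hkey := key_diff P lam hP1 f g hf0 hg0 (n + 2) (by omega) hagree
      have hne : lam ^ (n + 2) - lam ≠ 0 := sub_ne_zero.mpr (hlam (n + 2) (by omega))
      have haval : a (n + 2) = (PowerSeries.coeff (n + 2) (Polynomial.aeval g P))
          / (lam ^ (n + 2) - lam) := by
        rw [ha, hgg, poincareCoef]
      rw [hgn, mul_zero] at hkey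
      rw [hcoef]
      have : PowerSeries.coeff (n + 2) (Polynomial.aeval g P)
          = a (n + 2) * (lam ^ (n + 2) - lam) := by
        rw [haval, div_mul_cancel₀ _ hne]
      rw [this] at hkey
      rw [hcoef] at hkey
      linear_combination -hkey
  refine ⟨f, ⟨hf0, hf1, ?_⟩, ?_⟩
  · ext n
    rw [PowerSeries.coeff_rescale]
    exact hfeq n
  · rintro g' ⟨hg0', hg1', hgeq'⟩
    have hgeq : ∀ n : ℕ, lam ^ n * PowerSeries.coeff n g'
        = PowerSeries.coeff n (Polynomial.aeval g' P) := by
      intro n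
      rw [← PowerSeries.coeff_rescale, hgeq']
    ext n
    induction n using Nat.strong_induction_on with
    | _ n ih =>
      match n with
      | 0 => rw [hg0', hf0]
      | 1 => rw [hg1', hf1]
      | (n + 2) =>
        have hagree : ∀ k < n + 2, PowerSeries.coeff k g' = PowerSeries.coeff k f := by
          intro k hk
          exact ih k hk
        have hkey := key_diff P lam hP1 g' f hg0' hf0 (n + 2) (by omega) hagree
        rw [← hgeq (n + 2), ← hfeq (n + 2)] at hkey
        have hne : lam ^ (n + 2) - lam ≠ 0 := sub_ne_zero.mpr (hlam (n + 2) (by omega))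
        have : (lam ^ (n + 2) - lam) * (PowerSeries.coeff (n + 2) g' - PowerSeries.coeff (n + 2) f) = 0 := by
          linear_combination hkey
        rcases mul_eq_zero.mp this with h | h
        · exact absurd h hne
        · linear_combination h
end

section
/- For the quadratic polynomial P(z) = az(z-\omega) with a > 0 and 0 \neq \omega \in \mathbb{R}, the Julia set of P is contained in \mathbb{R} if and only if a\omega \geq 2 when \omega > 0, and a|\omega| \geq 4 when \omega < 0. -/
open Complex Metric Set

noncomputable section

namespace Complex

/-- compatibility: the complex absolute value as an `AbsoluteValue` -/
def abs : AbsoluteValue ℂ ℝ where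
  toFun := fun z => ‖z‖
  map_mul' := norm_mul
  nonneg' := norm_nonneg
  eq_zero' := fun _ => norm_eq_zero
  add_le' := norm_add_le

@[simp] theorem abs_eq_norm' (z : ℂ) : abs z = ‖z‖ := rfl

theorem abs_apply (z : ℂ) : abs z = Real.sqrt (normSq z) := norm_def z

theorem norm_eq_abs (z : ℂ) : ‖z‖ = abs z := rfl

theorem sq_abs (z : ℂ) : abs z ^ 2 = normSq z := Complex.sq_norm z

theorem abs_ofReal (r : ℝ) : abs (r : ℂ) = |r| := norm_real r

theorem abs_conj (z : ℂ) : abs ((starRingEnd ℂ) z) = abs z := norm_conj z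

theorem abs_I : abs I = 1 := norm_I

theorem abs_re_le_abs (z : ℂ) : |z.re| ≤ abs z := abs_re_le_norm z

theorem abs_le_abs_of_mapsTo_ball_self {R : ℝ} {f : ℂ → ℂ} {z : ℂ}
    (hd : DifferentiableOn ℂ f (ball 0 R)) (h_maps : MapsTo f (ball 0 R) (ball 0 R))
    (h₀ : f 0 = 0) (hz : abs z < R) : abs (f z) ≤ abs z :=
  norm_le_norm_of_mapsTo_ball hd (h_maps.mono_right ball_subset_closedBall) h₀ hz

end Complex

namespace QJ

/-- pseudo-hyperbolic distance on the unit disk -/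
def pd (x y : ℂ) : ℝ := Complex.abs (x - y) / Complex.abs (1 - (starRingEnd ℂ) x * y)

lemma normSq_identity (a u : ℂ) :
    Complex.normSq (1 - (starRingEnd ℂ) a * u) - Complex.normSq (u - a)
      = (1 - Complex.normSq a) * (1 - Complex.normSq u) := by
  simp only [Complex.normSq_apply, Complex.sub_re, Complex.sub_im, Complex.mul_re, Complex.mul_im,
    Complex.one_re, Complex.one_im, Complex.conj_re, Complex.conj_im]
  ring

lemma abs_sub_lt (ha : Complex.abs a < 1) (hu : Complex.abs u < 1) :
    Complex.abs (u - a) < Complex.abs (1 - (starRingEnd ℂ) a * u) := by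
  have h1 : Complex.normSq (u - a) < Complex.normSq (1 - (starRingEnd ℂ) a * u) := by
    have := normSq_identity a u
    have ha' : Complex.normSq a < 1 := by
      rw [← Complex.sq_abs] ; nlinarith [Complex.abs.nonneg a]
    have hu' : Complex.normSq u < 1 := by
      rw [← Complex.sq_abs] ; nlinarith [Complex.abs.nonneg u]
    nlinarith
  have := Real.sqrt_lt_sqrt (Complex.normSq_nonneg _) h1
  simpa [Complex.norm_def] using this

lemma abs_sub_le (ha : Complex.abs a ≤ 1) (hu : Complex.abs u ≤ 1) :
    Complex.abs (u - a) ≤ Complex.abs (1 - (starRingEnd ℂ) a * u) := by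
  have h1 : Complex.normSq (u - a) ≤ Complex.normSq (1 - (starRingEnd ℂ) a * u) := by
    have := normSq_identity a u
    have ha' : Complex.normSq a ≤ 1 := by
      rw [← Complex.sq_abs] ; nlinarith [Complex.abs.nonneg a]
    have hu' : Complex.normSq u ≤ 1 := by
      rw [← Complex.sq_abs] ; nlinarith [Complex.abs.nonneg u]
    nlinarith
  have := Real.sqrt_le_sqrt h1
  simpa [Complex.norm_def] using this

lemma denom_ne (ha : Complex.abs a < 1) (hu : Complex.abs u < 1) :
    (1 - (starRingEnd ℂ) a * u) ≠ 0 := by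
  intro h
  have h2 := abs_sub_lt ha hu
  rw [h] at h2
  simp only [map_zero] at h2
  exact absurd h2 (Complex.abs.nonneg _).not_gt


/-- disk automorphism -/
def moeb (a u : ℂ) : ℂ := (u - a) / (1 - (starRingEnd ℂ) a * u)

lemma abs_moeb_lt_one (ha : Complex.abs a < 1) (hu : Complex.abs u < 1) :
    Complex.abs (moeb a u) < 1 := by
  rw [moeb, map_div₀]
  have h2 := abs_sub_lt ha hu
  have h3 : (0:ℝ) < Complex.abs (1 - (starRingEnd ℂ) a * u) :=
    Complex.abs.pos (denom_ne ha hu)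
  rw [div_lt_one h3]
  exact h2

lemma moeb_self (a : ℂ) : moeb a a = 0 := by simp [moeb]

lemma moeb_neg_moeb (ha : Complex.abs a < 1) (hu : Complex.abs u < 1) :
    moeb (-a) (moeb a u) = u := by
  have h1 : (1 - (starRingEnd ℂ) a * u) ≠ 0 := denom_ne ha hu
  rw [moeb, moeb]
  rw [div_sub' h1, map_neg, neg_mul, sub_neg_eq_add, div_eq_iff]
  · have h1' : 1 - u * (starRingEnd ℂ) a ≠ 0 := by rw [mul_comm]; exact h1
    field_simp
    ring
  · intro h
    apply h1
    have h2 : (1 - (starRingEnd ℂ) a * u) + (starRingEnd ℂ) a * (u - a) = 0 := by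
      field_simp [h1] at h
      linear_combination h
    have h3 : 1 - (starRingEnd ℂ) a * a = 0 := by linear_combination h2
    have : Complex.abs ((starRingEnd ℂ) a * a) = Complex.abs a * Complex.abs a := by
      simp [map_mul]
    have h4 : (starRingEnd ℂ) a * a = 1 := by linear_combination -h3
    rw [h4] at this
    simp at this
    rw [Complex.abs_eq_norm'] at ha
    nlinarith [norm_nonneg a]

lemma moeb_zero (a : ℂ) : moeb (-a) 0 = a := by simp [moeb]

lemma moeb_differentiableOn (ha : Complex.abs a < 1) :
    DifferentiableOn ℂ (moeb a) (ball 0 1) := by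
  intro u hu
  have hu' : Complex.abs u < 1 := by simpa [Complex.dist_eq] using hu
  exact ((differentiableAt_id.sub (differentiableAt_const a)).div
    ((differentiableAt_const _).sub ((differentiableAt_const _).mul differentiableAt_id))
    (denom_ne ha hu')).differentiableWithinAt

lemma pd_eq_abs_moeb (x y : ℂ) : pd x y = Complex.abs (moeb x y) := by
  rw [pd, moeb, map_div₀, AbsoluteValue.map_sub Complex.abs]

/-- Schwarz–Pick lemma on the unit disk. -/
lemma schwarz_pick {f : ℂ → ℂ} (hd : DifferentiableOn ℂ f (ball 0 1))
    (hm : MapsTo f (ball 0 1) (ball 0 1)) {a b : ℂ}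
    (ha : Complex.abs a < 1) (hb : Complex.abs b < 1) :
    pd (f a) (f b) ≤ pd a b := by
  have hab : a ∈ ball (0:ℂ) 1 := by simpa [Complex.dist_eq] using ha
  have hbb : b ∈ ball (0:ℂ) 1 := by simpa [Complex.dist_eq] using hb
  have hfa : Complex.abs (f a) < 1 := by
    have := hm hab; simpa [Complex.dist_eq] using this
  set g : ℂ → ℂ := fun u => moeb (f a) (f (moeb (-a) u)) with hg
  have hmoebneg : ∀ u : ℂ, Complex.abs u < 1 → Complex.abs (moeb (-a) u) < 1 := by
    intro u hu
    have : Complex.abs (-a) < 1 := by simpa using ha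
    exact abs_moeb_lt_one this hu
  have hgd : DifferentiableOn ℂ g (ball 0 1) := by
    intro u hu
    have hu' : Complex.abs u < 1 := by simpa [Complex.dist_eq] using hu
    have h1 : Complex.abs (moeb (-a) u) < 1 := hmoebneg u hu'
    have h2 : Complex.abs (f (moeb (-a) u)) < 1 := by
      have := hm (by simpa [Complex.dist_eq] using h1); simpa [Complex.dist_eq] using this
    have d1 : DifferentiableWithinAt ℂ (moeb (-a)) (ball 0 1) u :=
      moeb_differentiableOn (by simpa using ha) u hu
    have d2 : DifferentiableAt ℂ f (moeb (-a) u) := by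
      apply hd.differentiableAt
      exact isOpen_ball.mem_nhds (by simpa [Complex.dist_eq] using h1)
    have d3 : DifferentiableAt ℂ (moeb (f a)) (f (moeb (-a) u)) := by
      have := moeb_differentiableOn hfa
      apply (this _ (by simpa [Complex.dist_eq] using h2)).differentiableAt
        (isOpen_ball.mem_nhds (by simpa [Complex.dist_eq] using h2))
    exact (d3.comp_differentiableWithinAt u (d2.comp_differentiableWithinAt u d1))
  have hgm : MapsTo g (ball 0 1) (ball 0 1) := by
    intro u hu
    have hu' : Complex.abs u < 1 := by simpa [Complex.dist_eq] using hu
    have h1 := hmoebneg u hu'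
    have h2 : Complex.abs (f (moeb (-a) u)) < 1 := by
      have := hm (by simpa [Complex.dist_eq] using h1); simpa [Complex.dist_eq] using this
    have := abs_moeb_lt_one hfa h2
    simpa [Complex.dist_eq] using this
  have hg0 : g 0 = 0 := by
    rw [hg]; simp only [moeb_zero]; exact moeb_self _
  have key := Complex.abs_le_abs_of_mapsTo_ball_self hgd hgm hg0
    (z := moeb a b) (by simpa using abs_moeb_lt_one ha hb)
  have hgb : g (moeb a b) = moeb (f a) (f b) := by
    rw [hg]; simp only [moeb_neg_moeb ha hb]
  rw [hgb] at key
  rw [pd_eq_abs_moeb, pd_eq_abs_moeb]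
  exact key

lemma key_ineq {lam : ℝ} (h0 : 0 < lam) (h1 : lam < 1) {c : ℂ} (hc : Complex.abs c ≤ lam^2) :
    (1+lam^2) * Complex.abs ((lam:ℂ)^2 - c) ≤ 2*lam^2 * Complex.abs (1 - c) := by
  have hl2 : lam^2 < 1 := by nlinarith
  have hp : -(lam^2) ≤ c.re := by
    have h2 := Complex.abs_re_le_abs c
    have := abs_le.mp (h2.trans hc)
    linarith [this.1]
  have hm : c.re^2 + c.im^2 ≤ lam^4 := by
    have : Complex.normSq c ≤ (lam^2)^2 := by
      rw [← Complex.sq_abs]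
      have := Complex.abs.nonneg c
      nlinarith
    rw [Complex.normSq_apply] at this
    nlinarith
  have hsq : ((1+lam^2) * Complex.abs ((lam:ℂ)^2 - c))^2
      ≤ (2*lam^2 * Complex.abs (1 - c))^2 := by
    rw [mul_pow, mul_pow, Complex.sq_abs, Complex.sq_abs, ← Complex.ofReal_pow]
    simp only [Complex.normSq_apply, Complex.sub_re, Complex.sub_im, Complex.one_re,
      Complex.one_im, Complex.ofReal_re, Complex.ofReal_im]
    nlinarith [mul_nonneg (by nlinarith : (0:ℝ) ≤ (1-lam^2)*(1+3*lam^2))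
        (by nlinarith : (0:ℝ) ≤ lam^4 - (c.re^2 + c.im^2)),
      mul_nonneg (by positivity : (0:ℝ) ≤ 2*lam^2*(1-lam^2)^2)
        (by linarith : (0:ℝ) ≤ c.re + lam^2)]
  have hL : 0 ≤ (1+lam^2) * Complex.abs ((lam:ℂ)^2 - c) := by positivity
  have hR : 0 ≤ 2*lam^2 * Complex.abs (1 - c) := by positivity
  nlinarith [hsq]

lemma pd_contract {f : ℂ → ℂ} {l0 lam : ℝ} (hd : DifferentiableOn ℂ f (ball 0 1))
    (hm : ∀ u : ℂ, Complex.abs u < 1 → Complex.abs (f u) ≤ l0)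
    (h00 : 0 ≤ l0) (hll : l0 < lam) (hl1 : lam < 1)
    {a b : ℂ} (ha : Complex.abs a < 1) (hb : Complex.abs b < 1) :
    pd (f a) (f b) ≤ (2*lam/(1+lam^2)) * pd a b := by
  have hl0 : 0 < lam := lt_of_le_of_lt h00 hll
  set x := f a with hx
  set y := f b with hy
  set cc := (starRingEnd ℂ) x * y with hcc
  have hxl : Complex.abs x ≤ l0 := hm a ha
  have hyl : Complex.abs y ≤ l0 := hm b hb
  have habscc : Complex.abs cc ≤ l0^2 := by
    rw [hcc, map_mul]
    have : Complex.abs ((starRingEnd ℂ) x) = Complex.abs x := Complex.abs_conj x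
    rw [this]
    nlinarith [Complex.abs.nonneg x, Complex.abs.nonneg y]
  have habscc' : Complex.abs cc ≤ lam^2 := by nlinarith
  have hC2pos : (0:ℝ) < Complex.abs ((lam:ℂ)^2 - cc) := by
    have h1 : Complex.abs ((lam:ℂ)^2) = lam^2 := by
      rw [map_pow, Complex.abs_ofReal, abs_of_pos hl0]
    have h2 : lam^2 - Complex.abs cc ≤ Complex.abs ((lam:ℂ)^2 - cc) := by
      have h3 := norm_sub_norm_le ((lam:ℂ)^2) cc
      rw [Complex.norm_eq_abs, Complex.norm_eq_abs, Complex.norm_eq_abs, h1] at h3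
      exact h3
    nlinarith
  have hC1pos : (0:ℝ) < Complex.abs (1 - cc) := by
    have h2 : 1 - Complex.abs cc ≤ Complex.abs (1 - cc) := by
      have h3 := norm_sub_norm_le (1:ℂ) cc
      rw [Complex.norm_eq_abs, Complex.norm_eq_abs, Complex.norm_eq_abs] at h3
      simpa using h3
    nlinarith
  -- Schwarz–Pick applied to g = f / lam
  set g : ℂ → ℂ := fun u => f u / (lam:ℂ) with hg
  have hgd : DifferentiableOn ℂ g (ball 0 1) := hd.div_const _
  have hgm : MapsTo g (ball 0 1) (ball 0 1) := by
    intro u hu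
    have hu' : Complex.abs u < 1 := by simpa [Complex.dist_eq] using hu
    have : Complex.abs (g u) = Complex.abs (f u) / lam := by
      rw [hg]; simp [map_div₀, Complex.abs_ofReal, abs_of_pos hl0]
    have h2 : Complex.abs (g u) < 1 := by
      rw [this, div_lt_one hl0]
      exact lt_of_le_of_lt (hm u hu') hll
    simpa [Complex.dist_eq] using h2
  have sp := schwarz_pick hgd hgm ha hb
  have hga : g a = x / (lam:ℂ) := rfl
  have hgb : g b = y / (lam:ℂ) := rfl
  have hlamne : ((lam:ℝ):ℂ) ≠ 0 := by
    exact Complex.ofReal_ne_zero.mpr hl0.ne'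
  have hpdg : pd (g a) (g b) = (lam * Complex.abs (x - y)) / Complex.abs ((lam:ℂ)^2 - cc) := by
    rw [pd, hga, hgb]
    have h1 : x / (lam:ℂ) - y / (lam:ℂ) = (x - y) / (lam:ℂ) := by ring
    have h2 : 1 - (starRingEnd ℂ) (x / (lam:ℂ)) * (y / (lam:ℂ))
        = ((lam:ℂ)^2 - cc) / (lam:ℂ)^2 := by
      rw [map_div₀, Complex.conj_ofReal]
      field_simp
      ring
    rw [h1, h2, map_div₀, map_div₀]
    rw [map_pow, Complex.abs_ofReal, abs_of_pos hl0]
    rw [div_div_div_comm]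
    field_simp
  rw [hpdg] at sp
  -- sp : lam * |x-y| / |lam^2 - cc| ≤ pd a b
  have hA : Complex.abs (x - y) ≤ (pd a b) * Complex.abs ((lam:ℂ)^2 - cc) / lam := by
    rw [div_le_iff₀ hC2pos] at sp
    rw [le_div_iff₀ hl0]
    nlinarith [sp]
  have hpdxy : pd x y = Complex.abs (x - y) / Complex.abs (1 - cc) := rfl
  rw [hpdxy, div_le_iff₀ hC1pos]
  have hkey := key_ineq hl0 hl1 habscc'
  have hpdnn : 0 ≤ pd a b := by
    rw [pd]; positivity
  -- |x-y| ≤ pd a b * |λ²-cc| / λ ≤ pd a b * (2λ/(1+λ²)) * |1-cc|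
  have h3 : (pd a b) * Complex.abs ((lam:ℂ)^2 - cc) / lam
      ≤ 2*lam/(1+lam^2) * pd a b * Complex.abs (1 - cc) := by
    rw [div_le_iff₀ hl0]
    have h4 : Complex.abs ((lam:ℂ)^2 - cc) ≤ 2*lam/(1+lam^2) * Complex.abs (1 - cc) * lam := by
      rw [div_mul_eq_mul_div, div_mul_eq_mul_div, le_div_iff₀ (by positivity : (0:ℝ) < 1+lam^2)]
      nlinarith [hkey]
    calc (pd a b) * Complex.abs ((lam:ℂ)^2 - cc)
        ≤ (pd a b) * (2*lam/(1+lam^2) * Complex.abs (1 - cc) * lam) := by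
          exact mul_le_mul_of_nonneg_left h4 hpdnn
      _ = 2*lam/(1+lam^2) * pd a b * Complex.abs (1 - cc) * lam := by ring
  linarith [hA, h3]

/-! ### Complex square root branch -/

def csqrt (z : ℂ) : ℂ := z ^ ((1:ℂ)/2)

lemma csqrt_mul_self {z : ℂ} (hz : z ≠ 0) : csqrt z * csqrt z = z := by
  rw [csqrt, ← Complex.cpow_add _ _ hz]
  norm_num

lemma abs_csqrt_sq {z : ℂ} (hz : z ≠ 0) :
    Complex.abs (csqrt z) * Complex.abs (csqrt z) = Complex.abs z := by
  rw [← map_mul, csqrt_mul_self hz]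

lemma csqrt_conj {z : ℂ} (hz : z.arg ≠ Real.pi) (hz0 : z ≠ 0) :
    csqrt ((starRingEnd ℂ) z) = (starRingEnd ℂ) (csqrt z) := by
  have hz0' : (starRingEnd ℂ) z ≠ 0 := by simpa using hz0
  rw [csqrt, csqrt, Complex.cpow_def_of_ne_zero hz0', Complex.cpow_def_of_ne_zero hz0,
    Complex.log_conj _ hz, ← Complex.exp_conj]
  congr 1
  rw [map_mul, map_div₀, map_one, map_ofNat]

/-! ### orbit bound and escape for Q c -/

/-- one orbit step for `Q c` -/
lemma orbit_step (c : ℝ) (z : ℂ) (n : ℕ) :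
    (fun w : ℂ => w^2 + (c:ℂ))^[n+1] z = ((fun w : ℂ => w^2 + (c:ℂ))^[n] z)^2 + (c:ℂ) := by
  rw [Function.iterate_succ_apply']

lemma escape_lemma {c B : ℝ} (hB2 : 2 ≤ B) (hBc : Complex.abs (c:ℂ) + B ≤ B^2) {z : ℂ}
    (hz : B < Complex.abs z)
    (hbd : Bornology.IsBounded (Set.range fun n : ℕ => (fun w : ℂ => w^2 + (c:ℂ))^[n] z)) :
    False := by
  set Q : ℂ → ℂ := fun w => w^2 + (c:ℂ) with hQ
  have step : ∀ w : ℂ, B < Complex.abs w → 2*(Complex.abs w - B) ≤ Complex.abs (Q w) - B := by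
    intro w hw
    have h1 : Complex.abs (w^2) - Complex.abs ((c:ℂ)) ≤ Complex.abs (Q w) := by
      have := norm_sub_norm_le (w^2) (-(c:ℂ))
      simp only [sub_neg_eq_add, norm_neg, Complex.norm_eq_abs] at this
      linarith
    have h2 : Complex.abs (w^2) = Complex.abs w^2 := by rw [map_pow]
    nlinarith [Complex.abs.nonneg w]
  have grow : ∀ k : ℕ, (2:ℝ)^k * (Complex.abs z - B) ≤ Complex.abs (Q^[k] z) - B := by
    intro k
    induction k with
    | zero => simp
    | succ k ih =>
      have hBk : B < Complex.abs (Q^[k] z) := by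
        have h2k : (1:ℝ) ≤ 2^k := one_le_pow₀ (by norm_num : (1:ℝ) ≤ 2)
        nlinarith
      have := step _ hBk
      rw [Function.iterate_succ_apply']
      have h2k : (1:ℝ) ≤ 2^k := one_le_pow₀ (by norm_num : (1:ℝ) ≤ 2)
      calc (2:ℝ)^(k+1) * (Complex.abs z - B) = 2*((2:ℝ)^k * (Complex.abs z - B)) := by ring
        _ ≤ 2*(Complex.abs (Q^[k] z) - B) := by nlinarith
        _ ≤ Complex.abs (Q (Q^[k] z)) - B := this
  obtain ⟨C, hC⟩ := isBounded_iff_forall_norm_le.mp hbd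
  obtain ⟨k, hk⟩ := pow_unbounded_of_one_lt ((C + B)/(Complex.abs z - B)) (by norm_num : (1:ℝ) < 2)
  have h1 := grow k
  have h2 := hC (Q^[k] z) ⟨k, rfl⟩
  rw [Complex.norm_eq_abs] at h2
  have h3 : 0 < Complex.abs z - B := by linarith
  rw [div_lt_iff₀ h3] at hk
  nlinarith

lemma pd_le_one {x y : ℂ} (hx : Complex.abs x < 1) (hy : Complex.abs y < 1) :
    pd x y ≤ 1 := by
  rw [pd, div_le_one (Complex.abs.pos (denom_ne hx hy))]
  rw [AbsoluteValue.map_sub Complex.abs]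
  exact (abs_sub_lt hx hy).le

lemma abs_sub_le_two_pd {x y : ℂ} (hx : Complex.abs x < 1) (hy : Complex.abs y < 1) :
    Complex.abs (x - y) ≤ 2 * pd x y := by
  have hden : 0 < Complex.abs (1 - (starRingEnd ℂ) x * y) := Complex.abs.pos (denom_ne hx hy)
  have hle : Complex.abs (1 - (starRingEnd ℂ) x * y) ≤ 2 := by
    calc Complex.abs (1 - (starRingEnd ℂ) x * y)
        ≤ Complex.abs 1 + Complex.abs ((starRingEnd ℂ) x * y) := by
          exact (Complex.abs.sub_le_add _ _)
      _ ≤ 2 := by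
          rw [map_one, map_mul, Complex.abs_conj]
          nlinarith [Complex.abs.nonneg x, Complex.abs.nonneg y]
  rw [pd, ← mul_div_assoc, le_div_iff₀ hden]
  nlinarith [Complex.abs.nonneg (x - y)]

set_option maxHeartbeats 1000000 in
/-- main hard case: for `c < -2`, bounded orbits are real. -/
theorem im_eq_zero_of_bounded_orbit {c : ℝ} (hc : c < -2) {z : ℂ}
    (hbd : Bornology.IsBounded (Set.range fun n : ℕ => (fun w : ℂ => w^2 + (c:ℂ))^[n] z)) :
    z.im = 0 := by
  by_contra him
  set Q : ℂ → ℂ := fun w => w^2 + (c:ℂ) with hQ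
  set s : ℝ := -c with hs
  have hs2 : 2 < s := by simp [hs]; linarith
  set bet : ℝ := (1 + Real.sqrt (1+4*s))/2 with hbet
  have hsqrt : Real.sqrt (1+4*s) ^ 2 = 1+4*s := Real.sq_sqrt (by linarith)
  have hsqrt3 : 3 < Real.sqrt (1+4*s) := by
    nlinarith [Real.sqrt_nonneg (1+4*s)]
  have hbet2 : 2 < bet := by rw [hbet]; linarith
  have hbetfix : bet^2 = bet + s := by rw [hbet]; nlinarith
  have hbets : bet < s := by nlinarith
  -- the orbit is bounded by bet
  have horb : ∀ n : ℕ, Complex.abs (Q^[n] z) ≤ bet := by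
    intro n
    by_contra hgt
    push_neg at hgt
    have habsc : Complex.abs ((c:ℂ)) = s := by
      rw [Complex.abs_ofReal]; rw [hs]; rw [abs_of_neg (by linarith)]
    apply escape_lemma (B := bet) (c := c) hbet2.le (by rw [habsc]; nlinarith) hgt
    -- boundedness of orbit of Q^[n] z
    obtain ⟨C, hC⟩ := isBounded_iff_forall_norm_le.mp hbd
    apply isBounded_iff_forall_norm_le.mpr
    refine ⟨C, ?_⟩
    rintro x ⟨k, rfl⟩
    simp only [← Function.iterate_add_apply]
    exact hC _ ⟨k + n, Function.iterate_add_apply _ _ _ _⟩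
  -- all orbit points are nonreal
  have hnonreal : ∀ n : ℕ, (Q^[n] z).im ≠ 0 := by
    intro n
    induction n with
    | zero => simpa using him
    | succ n ih =>
      intro h0
      set w := Q^[n] z with hw
      have hstep : Q^[n+1] z = w^2 + (c:ℂ) := orbit_step c z n
      have him2 : (w^2 + (c:ℂ)).im = 2 * w.re * w.im := by
        simp [Complex.add_im, Complex.mul_im, pow_two, Complex.ofReal_im]
        ring
      rw [hstep] at h0
      rw [him2] at h0
      have hre : w.re = 0 := by
        rcases mul_eq_zero.mp h0 with h | h
        · rcases mul_eq_zero.mp h with h | h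
          · norm_num at h
          · exact h
        · exact absurd h ih
      -- then Q^[n+1] z = -(w.im)^2 + c, with abs > bet
      have habs : Complex.abs (w^2 + (c:ℂ)) = w.im^2 + s := by
        have hw2 : w^2 + (c:ℂ) = ((-(w.im^2) + c : ℝ) : ℂ) := by
          apply Complex.ext
          · simp [pow_two, Complex.mul_re, hre]
          · simp [pow_two, Complex.mul_im, hre]
        rw [hw2, Complex.abs_ofReal, abs_of_neg (by nlinarith [sq_nonneg w.im] : -(w.im^2) + c < 0)]
        rw [hs]; ring
      have := horb (n+1)
      rw [hstep, habs] at this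
      have himne : w.im ≠ 0 := ih
      have himpos : 0 < w.im^2 := by rcases himne.lt_or_gt with h | h <;> nlinarith
      nlinarith
  -- setup contraction constants
  set R : ℝ := (bet + s)/2 with hR
  have hbetR : bet < R := by rw [hR]; linarith
  have hRs : R < s := by rw [hR]; linarith
  have hR0 : 0 < R := by linarith
  set r : ℝ := Real.sqrt (R + s) with hr
  have hr0 : 0 ≤ r := Real.sqrt_nonneg _
  have hrsq : r^2 = R + s := Real.sq_sqrt (by linarith)
  have hrR : r < R := by
    have h1 : R + s < R^2 := by nlinarith [mul_pos (sub_pos.mpr hbetR) (by linarith : (0:ℝ) < R + bet - 1)]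
    nlinarith
  set l0 : ℝ := r/R with hl0
  have hl00 : 0 ≤ l0 := div_nonneg hr0 hR0.le
  have hl01 : l0 < 1 := by rw [hl0, div_lt_one hR0]; exact hrR
  set lam : ℝ := (l0 + 1)/2 with hlam
  have hll : l0 < lam := by rw [hlam]; linarith
  have hlam1 : lam < 1 := by rw [hlam]; linarith
  set mu : ℝ := 2*lam/(1+lam^2) with hmu
  have hlampos : 0 < lam := by rw [hlam]; linarith
  have hmu0 : 0 ≤ mu := le_of_lt (div_pos (by linarith) (by nlinarith [sq_nonneg lam]))
  have hmu1 : mu < 1 := by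
    rw [hmu, div_lt_one (by positivity)]
    nlinarith [sq_nonneg (1 - lam)]
  -- one-step contraction
  have hstep : ∀ n : ℕ, pd ((Q^[n] z)/R) ((starRingEnd ℂ) (Q^[n] z)/R)
      ≤ mu * pd ((Q^[n+1] z)/R) ((starRingEnd ℂ) (Q^[n+1] z)/R) := by
    intro n
    set w := Q^[n] z with hw
    set v := Q^[n+1] z with hv
    have hQrel : v = w^2 + (c:ℂ) := orbit_step c z n
    have hvim : v.im ≠ 0 := hnonreal (n+1)
    have hzeta : w^2 = v + (s:ℂ) := by rw [hQrel, hs]; push_cast; ring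
    have hzim : (v + (s:ℂ)).im = v.im := by simp
    have hzetane : v + (s:ℂ) ≠ 0 := by
      intro h
      rw [Complex.ext_iff] at h
      simp at h
      exact hvim h.2
    have hargne : (v + (s:ℂ)).arg ≠ Real.pi := by
      intro h
      rw [Complex.arg_eq_pi_iff] at h
      exact hvim (by rw [← hzim]; exact h.2)
    set sq := csqrt (v + (s:ℂ)) with hsq'
    have hsqsq : sq * sq = v + (s:ℂ) := csqrt_mul_self hzetane
    have hwsq : (w - sq) * (w + sq) = 0 := by
      have : w^2 - sq^2 = 0 := by
        rw [hzeta, pow_two, hsqsq]; ring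
      linear_combination this
    have hvabs : Complex.abs v ≤ bet := horb (n+1)
    have hRC : ((R:ℝ):ℂ) ≠ 0 := Complex.ofReal_ne_zero.mpr hR0.ne'
    have main : ∀ sg : ℂ, (sg = 1 ∨ sg = -1) → w = sg * sq →
        pd (w/R) ((starRingEnd ℂ) w/R) ≤ mu * pd (v/R) ((starRingEnd ℂ) v/R) := by
      intro sg hsg hwsg
      have habsg : Complex.abs sg = 1 := by rcases hsg with h | h <;> simp [h]
      have hconjsg : (starRingEnd ℂ) sg = sg := by rcases hsg with h | h <;> simp [h]
      set f : ℂ → ℂ := fun u => sg * csqrt ((R:ℂ)*u + (s:ℂ)) / (R:ℂ) with hf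
      have hslit : ∀ u : ℂ, Complex.abs u < 1 → ((R:ℂ)*u + (s:ℂ)) ∈ Complex.slitPlane := by
        intro u hu
        rw [Complex.mem_slitPlane_iff]
        left
        have h1 : |u.re| ≤ Complex.abs u := Complex.abs_re_le_abs u
        have h2 : ((R:ℂ)*u + (s:ℂ)).re = R * u.re + s := by
          simp [Complex.add_re, Complex.mul_re]
        rw [h2]
        have := abs_le.mp h1
        nlinarith
      have hne : ∀ u : ℂ, Complex.abs u < 1 → ((R:ℂ)*u + (s:ℂ)) ≠ 0 := by
        intro u hu h0
        have := hslit u hu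
        rw [h0] at this
        exact Complex.zero_notMem_slitPlane this
      have hd : DifferentiableOn ℂ f (ball 0 1) := by
        intro u hu
        have hu' : Complex.abs u < 1 := by simpa [Complex.dist_eq] using hu
        have h1 : HasDerivAt (fun u : ℂ => (R:ℂ)*u + (s:ℂ)) (R:ℂ) u := by
          simpa using ((hasDerivAt_id u).const_mul ((R:ℂ))).add_const ((s:ℂ))
        have h2 : HasDerivAt (fun u : ℂ => ((R:ℂ)*u + (s:ℂ)) ^ ((1:ℂ)/2))
            (((1:ℂ)/2) * ((R:ℂ)*u + (s:ℂ)) ^ (((1:ℂ)/2) - 1) * (R:ℂ)) u :=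
          h1.cpow_const (hslit u hu')
        exact (((h2.differentiableAt.const_mul sg).div_const _)).differentiableWithinAt
      have hm : ∀ u : ℂ, Complex.abs u < 1 → Complex.abs (f u) ≤ l0 := by
        intro u hu
        have h1 : Complex.abs ((R:ℂ)*u + (s:ℂ)) ≤ R + s := by
          calc Complex.abs ((R:ℂ)*u + (s:ℂ)) ≤ Complex.abs ((R:ℂ)*u) + Complex.abs ((s:ℂ)) :=
                Complex.abs.add_le _ _
            _ ≤ R + s := by
                rw [map_mul, Complex.abs_ofReal, Complex.abs_ofReal,
                  abs_of_pos hR0, abs_of_pos (by linarith : (0:ℝ) < s)]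
                nlinarith [Complex.abs.nonneg u]
        have h2 := abs_csqrt_sq (hne u hu)
        have h3 : Complex.abs (csqrt ((R:ℂ)*u + (s:ℂ))) ≤ r := by
          nlinarith [Complex.abs.nonneg (csqrt ((R:ℂ)*u + (s:ℂ)))]
        rw [hf]
        simp only [map_div₀, map_mul, habsg, one_mul, Complex.abs_ofReal, abs_of_pos hR0]
        rw [hl0]
        exact by gcongr
      have hva : Complex.abs (v/(R:ℂ)) < 1 := by
        rw [map_div₀, Complex.abs_ofReal, abs_of_pos hR0, div_lt_one hR0]
        linarith [hvabs]
      have hvb : Complex.abs ((starRingEnd ℂ) v/(R:ℂ)) < 1 := by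
        rw [map_div₀, Complex.abs_conj, Complex.abs_ofReal, abs_of_pos hR0, div_lt_one hR0]
        linarith [hvabs]
      have hcontr := pd_contract hd hm hl00 hll hlam1 hva hvb
      have hargR : (R:ℂ) * (v/(R:ℂ)) + (s:ℂ) = v + (s:ℂ) := by
        field_simp
      have hfv : f (v/(R:ℂ)) = w/(R:ℂ) := by
        rw [hf]
        simp only [hargR, ← hsq', hwsg]
      have hfvc : f ((starRingEnd ℂ) v/(R:ℂ)) = (starRingEnd ℂ) w/(R:ℂ) := by
        rw [hf]
        have h1 : (R:ℂ) * ((starRingEnd ℂ) v/(R:ℂ)) + (s:ℂ) = (starRingEnd ℂ) (v + (s:ℂ)) := by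
          rw [map_add, Complex.conj_ofReal]
          field_simp
        simp only [h1, csqrt_conj hargne hzetane, ← hsq', hwsg]
        rw [map_mul, hconjsg]
      rw [hfv, hfvc] at hcontr
      rw [hmu]
      exact hcontr
    rcases mul_eq_zero.mp hwsq with hsgn | hsgn
    · exact main 1 (Or.inl rfl) (by rw [one_mul]; exact sub_eq_zero.mp hsgn)
    · exact main (-1) (Or.inr rfl) (by rw [neg_one_mul]; exact eq_neg_of_add_eq_zero_left hsgn)
  -- iterate the contraction
  have hmem : ∀ m : ℕ, Complex.abs ((Q^[m] z)/(R:ℂ)) < 1 := by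
    intro m
    rw [map_div₀, Complex.abs_ofReal, abs_of_pos hR0, div_lt_one hR0]
    linarith [horb m]
  have hmem' : ∀ m : ℕ, Complex.abs ((starRingEnd ℂ) (Q^[m] z)/(R:ℂ)) < 1 := by
    intro m
    rw [map_div₀, Complex.abs_conj, Complex.abs_ofReal, abs_of_pos hR0, div_lt_one hR0]
    linarith [horb m]
  have hdist : ∀ n : ℕ, pd (z/(R:ℂ)) ((starRingEnd ℂ) z/(R:ℂ)) ≤ mu^n := by
    have key : ∀ n : ℕ, pd (z/(R:ℂ)) ((starRingEnd ℂ) z/(R:ℂ))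
        ≤ mu^n * pd ((Q^[n] z)/(R:ℂ)) ((starRingEnd ℂ) (Q^[n] z)/(R:ℂ)) := by
      intro n
      induction n with
      | zero => simp
      | succ n ih =>
        calc pd (z/(R:ℂ)) ((starRingEnd ℂ) z/(R:ℂ))
            ≤ mu^n * pd ((Q^[n] z)/(R:ℂ)) ((starRingEnd ℂ) (Q^[n] z)/(R:ℂ)) := ih
          _ ≤ mu^n * (mu * pd ((Q^[n+1] z)/(R:ℂ)) ((starRingEnd ℂ) (Q^[n+1] z)/(R:ℂ))) :=
              mul_le_mul_of_nonneg_left (hstep n) (pow_nonneg hmu0 n)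
          _ = mu^(n+1) * pd ((Q^[n+1] z)/(R:ℂ)) ((starRingEnd ℂ) (Q^[n+1] z)/(R:ℂ)) := by
              ring
    intro n
    have h2 := key n
    have h3 := pd_le_one (hmem n) (hmem' n)
    nlinarith [pow_nonneg hmu0 n]
  -- conclude
  have habsval : Complex.abs (z/(R:ℂ) - (starRingEnd ℂ) z/(R:ℂ)) = 2*|z.im|/R := by
    have h1 : z/(R:ℂ) - (starRingEnd ℂ) z/(R:ℂ) = (z - (starRingEnd ℂ) z)/(R:ℂ) := by ring
    rw [h1, Complex.sub_conj, map_div₀, map_mul, Complex.abs_I, Complex.abs_ofReal,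
      Complex.abs_ofReal, abs_of_pos hR0, mul_one]
    rw [abs_mul]
    norm_num
  obtain ⟨n, hn⟩ := exists_pow_lt_of_lt_one (show (0:ℝ) < |z.im|/R by
    have : 0 < |z.im| := abs_pos.mpr him
    positivity) hmu1
  have h4 := abs_sub_le_two_pd (hmem 0) (hmem' 0)
  simp only [Function.iterate_zero_apply] at h4
  rw [habsval] at h4
  have h5 := hdist n
  have h6 : 0 < |z.im| := abs_pos.mpr him
  have h7 : 2*|z.im|/R ≤ 2*mu^n := by
    calc 2*|z.im|/R ≤ 2 * pd (z/(R:ℂ)) ((starRingEnd ℂ) z/(R:ℂ)) := h4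
      _ ≤ 2*mu^n := by linarith
  rw [lt_div_iff₀ hR0] at hn
  rw [div_le_iff₀ hR0] at h7
  nlinarith

/-- The Chebyshev case `c = -2`. -/
theorem im_eq_zero_of_bounded_orbit_neg_two {c : ℝ} (hc : c = -2) {z : ℂ}
    (hbd : Bornology.IsBounded (Set.range fun n : ℕ => (fun w : ℂ => w^2 + (c:ℂ))^[n] z)) :
    z.im = 0 := by
  by_contra him
  subst hc
  set Q : ℂ → ℂ := fun w => w^2 + ((-2:ℝ):ℂ) with hQ
  -- z = W + W⁻¹ with |W| > 1
  have hd2 : z^2 - 4 ≠ 0 := by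
    intro h
    have h2 : (z-2)*(z+2) = 0 := by linear_combination h
    rcases mul_eq_zero.mp h2 with h3 | h3
    · apply him; rw [sub_eq_zero] at h3; rw [h3]; norm_num
    · apply him
      have : z = -2 := by linear_combination h3
      rw [this]; norm_num
  have hdsq : csqrt (z^2 - 4) * csqrt (z^2 - 4) = z^2 - 4 := csqrt_mul_self hd2
  set d : ℂ := csqrt (z^2 - 4) with hdd
  have hww' : ((z + d)/2) * ((z - d)/2) = 1 := by
    field_simp
    linear_combination -hdsq
  set w : ℂ := (z + d)/2 with hw
  have hw0 : w ≠ 0 := by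
    intro h; rw [h, zero_mul] at hww'; exact one_ne_zero hww'.symm
  have hwinv : w⁻¹ = (z - d)/2 := (eq_inv_of_mul_eq_one_right hww').symm
  have hsum : w + w⁻¹ = z := by
    rw [hwinv, hw]; ring
  have habsw : Complex.abs w ≠ 1 := by
    intro h1
    apply him
    have hconj : (starRingEnd ℂ) w = w⁻¹ := by
      have h2 : w * (starRingEnd ℂ) w = 1 := by
        rw [Complex.mul_conj]
        rw [← Complex.sq_abs, h1]
        norm_num
      field_simp at h2 ⊢
      linear_combination h2
    have : z = w + (starRingEnd ℂ) w := by rw [hconj, hsum]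
    rw [this]
    simp [Complex.add_im, Complex.conj_im]
  -- choose W with |W| > 1
  obtain ⟨W, hW1, hWsum⟩ : ∃ W : ℂ, 1 < Complex.abs W ∧ W + W⁻¹ = z := by
    rcases lt_or_gt_of_ne habsw with h | h
    · refine ⟨w⁻¹, ?_, ?_⟩
      · rw [map_inv₀]
        rw [one_lt_inv_iff₀]  -- maybe wrong name
        exact ⟨Complex.abs.pos hw0, h⟩
      · rw [inv_inv, add_comm]; exact hsum
    · exact ⟨w, h, hsum⟩
  have hW0 : W ≠ 0 := by
    intro h; rw [h] at hW1; simp at hW1; linarith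
  -- orbit formula
  have horb : ∀ n : ℕ, Q^[n] z = W^(2^n) + (W^(2^n))⁻¹ := by
    intro n
    induction n with
    | zero => simpa using hWsum.symm
    | succ n ih =>
      have hstep : Q^[n+1] z = (Q^[n] z)^2 + ((-2:ℝ):ℂ) := orbit_step (-2) z n
      rw [hstep, ih]
      have hA : W^(2^n) ≠ 0 := pow_ne_zero _ hW0
      have h2 : (2:ℕ)^(n+1) = 2^n * 2 := by ring
      rw [h2, pow_mul]
      push_cast
      field_simp
      ring
  -- contradiction with boundedness
  obtain ⟨C, hC⟩ := isBounded_iff_forall_norm_le.mp hbd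
  obtain ⟨n, hn⟩ := pow_unbounded_of_one_lt (C + 1) hW1
  have h1 := hC (Q^[n] z) ⟨n, rfl⟩
  rw [Complex.norm_eq_abs, horb n] at h1
  have h2 : Complex.abs (W^(2^n)) - Complex.abs ((W^(2^n))⁻¹) ≤ C := by
    have := norm_sub_norm_le (W^(2^n)) (-(W^(2^n))⁻¹)
    simp only [sub_neg_eq_add, norm_neg, Complex.norm_eq_abs] at this
    linarith
  have h3 : Complex.abs (W^(2^n)) = Complex.abs W^(2^n) := by rw [map_pow]
  have h4 : Complex.abs ((W^(2^n))⁻¹) ≤ 1 := by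
    rw [map_inv₀, h3]
    have : (1:ℝ) ≤ Complex.abs W^(2^n) := one_le_pow₀ hW1.le
    rw [inv_le_one_iff₀]  -- maybe wrong
    right; exact this
  have h5 : Complex.abs W^n ≤ Complex.abs W^(2^n) :=
    pow_le_pow_right₀ hW1.le (Nat.le_of_lt (Nat.lt_two_pow_self))
  nlinarith
/-- For `-2 < c` (real quadratic has `c ≤ 1/4` automatic? we assume), there is a nonreal point
on the frontier of the filled Julia set of `z^2+c`. -/
theorem exists_nonreal_frontier {c : ℝ} (hc1 : -2 < c) (hc2 : c ≤ 1/4) :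
    ∃ x : ℂ, x ∈ frontier {z : ℂ |
      Bornology.IsBounded (Set.range fun n : ℕ => (fun w : ℂ => w^2 + (c:ℂ))^[n] z)} ∧
      x.im ≠ 0 := by
  set Q : ℂ → ℂ := fun w => w^2 + (c:ℂ) with hQ
  set K : Set ℂ := {z : ℂ | Bornology.IsBounded (Set.range fun n : ℕ => Q^[n] z)} with hK
  -- K is bounded
  set B : ℝ := |c| + 2 with hB
  have hB2 : 2 ≤ B := by rw [hB]; linarith [abs_nonneg c]
  have hBc : Complex.abs ((c:ℂ)) + B ≤ B^2 := by
    rw [Complex.abs_ofReal, hB]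
    nlinarith [abs_nonneg c]
  have hKbd : ∀ z ∈ K, Complex.abs z ≤ B := by
    intro z hz
    by_contra hgt
    push_neg at hgt
    exact escape_lemma hB2 hBc hgt hz
  -- a nonreal point of K
  obtain ⟨z₀, hz₀K, hz₀im⟩ : ∃ z₀ : ℂ, z₀ ∈ K ∧ 0 < z₀.im := by
    by_cases hcc : -3/4 < c
    · -- complex period-2 point
      set y : ℝ := Real.sqrt (3+4*c) with hy
      have hy0 : 0 < y := Real.sqrt_pos.mpr (by linarith)
      have hysq : y^2 = 3+4*c := Real.sq_sqrt (by linarith)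
      set z₀ : ℂ := ⟨-1/2, y/2⟩ with hz₀
      have hper : Q (Q z₀) = z₀ := by
        have hquad : z₀^2 + z₀ + ((c:ℂ) + 1) = 0 := by
          rw [hz₀]
          rw [Complex.ext_iff]
          constructor
          · simp [pow_two, Complex.mul_re, Complex.add_re, Complex.ofReal_re, Complex.one_re]
            nlinarith
          · simp [pow_two, Complex.mul_im, Complex.add_im, Complex.ofReal_im, Complex.one_im]
            ring
        show (z₀^2 + (c:ℂ))^2 + (c:ℂ) = z₀
        have h1 : z₀^2 + (c:ℂ) = -z₀ - 1 := by linear_combination hquad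
        rw [h1]
        linear_combination hquad
      have horb2 : ∀ n : ℕ, Q^[n] z₀ = z₀ ∨ Q^[n] z₀ = Q z₀ := by
        intro n
        induction n with
        | zero => left; rfl
        | succ n ih =>
          rcases ih with h | h
          · right; rw [Function.iterate_succ_apply', h]
          · left; rw [Function.iterate_succ_apply', h, hper]
      refine ⟨z₀, ?_, by rw [hz₀]; simpa using hy0⟩
      rw [hK]
      apply Bornology.IsBounded.subset (Bornology.IsBounded.union
        (Bornology.isBounded_singleton (x := z₀)) (Bornology.isBounded_singleton (x := Q z₀)))
      rintro x ⟨n, rfl⟩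
      rcases horb2 n with h | h
      · left; simp [h]
      · right; simp [h]
    · -- preimage of the fixed point -bet
      push_neg at hcc
      have hcneg : c < 0 := by linarith
      set u : ℝ := Real.sqrt (1-4*c) with hu
      have hu0 : 0 ≤ u := Real.sqrt_nonneg _
      have husq : u^2 = 1-4*c := Real.sq_sqrt (by linarith)
      set bet : ℝ := (1 + u)/2 with hbet
      have hbetfix : bet^2 = bet - c := by rw [hbet]; nlinarith
      have hbetpos : 0 < bet := by rw [hbet]; linarith
      have hcb : 0 < c + bet := by
        rw [hbet]
        have h1 : 0 < -4*c*(2+c) := by nlinarith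
        have h2 : (2*c+1)^2 < u^2 := by nlinarith
        have h3 : -(2*c+1) < u := by nlinarith
        linarith
      set z₀ : ℂ := Complex.I * (Real.sqrt (c + bet) : ℂ) with hz₀
      have hz₀sq : z₀^2 = -(((c + bet : ℝ)):ℂ) := by
        rw [hz₀]
        have : ((Real.sqrt (c+bet) : ℝ):ℂ)^2 = ((c+bet : ℝ):ℂ) := by
          rw [← Complex.ofReal_pow, Real.sq_sqrt hcb.le]
        rw [mul_pow, Complex.I_sq, this]
        ring
      have hQz₀ : Q z₀ = ((-bet : ℝ):ℂ) := by
        show z₀^2 + (c:ℂ) = _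
        rw [hz₀sq]
        push_cast
        ring
      have hQnb : Q ((-bet : ℝ):ℂ) = ((bet : ℝ):ℂ) := by
        show ((-bet : ℝ):ℂ)^2 + (c:ℂ) = _
        have hr : (-bet)^2 + c = bet := by nlinarith
        calc ((-bet : ℝ):ℂ)^2 + (c:ℂ) = (((-bet)^2 + c : ℝ) : ℂ) := by push_cast; ring
          _ = _ := by rw [hr]
      have hQb : Q ((bet : ℝ):ℂ) = ((bet : ℝ):ℂ) := by
        show ((bet : ℝ):ℂ)^2 + (c:ℂ) = _
        have hr : bet^2 + c = bet := by nlinarith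
        calc ((bet : ℝ):ℂ)^2 + (c:ℂ) = ((bet^2 + c : ℝ) : ℂ) := by push_cast; ring
          _ = _ := by rw [hr]
      have horb3 : ∀ n : ℕ, Q^[n] z₀ ∈ ({z₀, ((-bet : ℝ):ℂ), ((bet : ℝ):ℂ)} : Set ℂ) := by
        intro n
        induction n with
        | zero => left; rfl
        | succ n ih =>
          rw [Function.iterate_succ_apply']
          rcases ih with h | h | h
          · rw [h, hQz₀]; right; left; rfl
          · rw [h, hQnb]; right; right; rfl
          · rw [h, hQb]; right; right; rfl
      refine ⟨z₀, ?_, ?_⟩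
      · rw [hK]
        apply Bornology.IsBounded.subset
          (Set.Finite.isBounded (Set.toFinite ({z₀, ((-bet : ℝ):ℂ), ((bet : ℝ):ℂ)} : Set ℂ)))
        rintro x ⟨n, rfl⟩
        exact horb3 n
      · rw [hz₀]
        have : (Complex.I * ((Real.sqrt (c + bet) : ℝ):ℂ)).im = Real.sqrt (c + bet) := by
          simp
        rw [this]
        exact Real.sqrt_pos.mpr hcb
  -- take the point of maximal imaginary part on the closure of K
  have hKbdd : Bornology.IsBounded K := by
    apply isBounded_iff_forall_norm_le.mpr
    exact ⟨B, fun x hx => by rw [Complex.norm_eq_abs]; exact hKbd x hx⟩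
  have hKne : (closure K).Nonempty := ⟨z₀, subset_closure hz₀K⟩
  have hcomp : IsCompact (closure K) :=
    Metric.isCompact_of_isClosed_isBounded isClosed_closure hKbdd.closure
  obtain ⟨x, hxcl, hxmax⟩ := hcomp.exists_isMaxOn hKne (Complex.continuous_im.continuousOn)
  have hx0 : 0 < x.im := lt_of_lt_of_le hz₀im (hxmax (subset_closure hz₀K))
  refine ⟨x, ⟨hxcl, ?_⟩, hx0.ne'⟩
  intro hxint
  obtain ⟨ε, hε, hball⟩ := Metric.isOpen_iff.mp isOpen_interior x hxint
  set y : ℂ := x + Complex.I*((ε/2 : ℝ):ℂ) with hy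
  have hyK : y ∈ K := interior_subset (hball (by
    rw [mem_ball, hy, Complex.dist_eq]
    have : x + Complex.I*((ε/2 : ℝ):ℂ) - x = Complex.I*((ε/2 : ℝ):ℂ) := by ring
    rw [this, Complex.norm_eq_abs, map_mul, Complex.abs_I, one_mul, Complex.abs_ofReal]
    rw [abs_of_pos (by linarith)]
    linarith))
  have hyim : y.im = x.im + ε/2 := by
    rw [hy]; simp
  have h9 : y.im ≤ x.im := hxmax (subset_closure hyK)
  rw [hyim] at h9
  linarith

lemma isClosed_range_ofReal : IsClosed (Set.range (Complex.ofReal)) := by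
  have h : Set.range (Complex.ofReal) = Complex.im ⁻¹' {0} := by
    ext z
    constructor
    · rintro ⟨r, rfl⟩; simp
    · intro hz
      simp only [Set.mem_preimage, Set.mem_singleton_iff] at hz
      exact ⟨z.re, by apply Complex.ext <;> simp [hz]⟩
  rw [h]
  exact isClosed_singleton.preimage Complex.continuous_im

end QJ

/-- The filled Julia set of `P`: points with bounded forward orbit. -/
def filledJuliaSet (P : ℂ → ℂ) : Set ℂ :=
  {z : ℂ | Bornology.IsBounded (Set.range fun n : ℕ => P^[n] z)}

/-- The Julia set of a polynomial map `P`: the boundary of the filled Julia set. -/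
def juliaSet (P : ℂ → ℂ) : Set ℂ := frontier (filledJuliaSet P)

/-- For `P(z) = a z (z - ω)` with `a > 0` and `0 ≠ ω ∈ ℝ`, the Julia set of `P` is real
iff `aω ≥ 2` when `ω > 0`, and `a|ω| ≥ 4` when `ω < 0`. -/
theorem quadratic_real_julia_criterion (a ω : ℝ) (ha : 0 < a) (hω : ω ≠ 0) :
    juliaSet (fun z : ℂ => (a : ℂ) * z * (z - (ω : ℂ))) ⊆ Set.range (Complex.ofReal) ↔
      ((0 < ω ∧ 2 ≤ a * ω) ∨ (ω < 0 ∧ 4 ≤ a * |ω|)) := by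
  set t : ℝ := a*ω with ht
  set b : ℝ := -(t/2) with hb
  set c : ℝ := b - b^2 with hc
  set P : ℂ → ℂ := fun z : ℂ => (a : ℂ) * z * (z - (ω : ℂ)) with hP
  set Q : ℂ → ℂ := fun w : ℂ => w^2 + (c:ℂ) with hQ
  set φ : ℂ → ℂ := fun z => (a:ℂ)*z + (b:ℂ) with hφ
  have haC : (a:ℂ) ≠ 0 := Complex.ofReal_ne_zero.mpr ha.ne'
  have hsemi : ∀ z, φ (P z) = Q (φ z) := by
    intro z
    show (a:ℂ)*((a:ℂ)*z*(z - (ω:ℂ))) + (b:ℂ) = ((a:ℂ)*z + (b:ℂ))^2 + (c:ℂ)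
    rw [hc, hb, ht]
    push_cast
    ring
  have hiter : ∀ z n, Q^[n] (φ z) = φ (P^[n] z) := by
    intro z n
    induction n with
    | zero => simp
    | succ n ih => rw [Function.iterate_succ_apply', Function.iterate_succ_apply', ih, hsemi]
  have hfill : ∀ z : ℂ, z ∈ filledJuliaSet P ↔ φ z ∈ filledJuliaSet Q := by
    intro z
    simp only [filledJuliaSet, Set.mem_setOf_eq]
    constructor
    · intro hbd
      obtain ⟨C, hC⟩ := isBounded_iff_forall_norm_le.mp hbd
      apply isBounded_iff_forall_norm_le.mpr
      refine ⟨a*C + |b|, ?_⟩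
      rintro x ⟨n, rfl⟩
      show ‖Q^[n] (φ z)‖ ≤ a*C + |b|
      rw [hiter]
      calc ‖φ (P^[n] z)‖ ≤ ‖(a:ℂ)*(P^[n] z)‖ + ‖((b:ℝ):ℂ)‖ := norm_add_le _ _
        _ ≤ a*C + |b| := by
            rw [norm_mul, Complex.norm_real, Complex.norm_real, Real.norm_eq_abs,
              Real.norm_eq_abs, abs_of_pos ha]
            have h1 := hC (P^[n] z) ⟨n, rfl⟩
            have h2 : (0:ℝ) ≤ ‖P^[n] z‖ := norm_nonneg _
            nlinarith
    · intro hbd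
      obtain ⟨C, hC⟩ := isBounded_iff_forall_norm_le.mp hbd
      apply isBounded_iff_forall_norm_le.mpr
      refine ⟨(C + |b|)/a, ?_⟩
      rintro x ⟨n, rfl⟩
      have h1 := hC (Q^[n] (φ z)) ⟨n, rfl⟩
      rw [hiter] at h1
      have h2 : ‖(a:ℂ)*(P^[n] z)‖ ≤ C + |b| := by
        have h3 : (a:ℂ)*(P^[n] z) = φ (P^[n] z) - ((b:ℝ):ℂ) := by rw [hφ]; ring
        rw [h3]
        calc ‖φ (P^[n] z) - ((b:ℝ):ℂ)‖ ≤ ‖φ (P^[n] z)‖ + ‖((b:ℝ):ℂ)‖ := norm_sub_le _ _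
          _ ≤ C + |b| := by
              rw [Complex.norm_real, Real.norm_eq_abs]
              linarith
      rw [norm_mul, Complex.norm_real, Real.norm_eq_abs, abs_of_pos ha] at h2
      rw [le_div_iff₀ ha]
      linarith
  have hpre : filledJuliaSet P = φ ⁻¹' filledJuliaSet Q := Set.ext fun z => hfill z
  have hfront : juliaSet P = φ ⁻¹' (frontier (filledJuliaSet Q)) := by
    rw [juliaSet, hpre]
    have he : φ = ⇑(affineHomeomorph (a:ℂ) ((b:ℝ):ℂ) haC) := rfl
    rw [he]
    exact (Homeomorph.preimage_frontier _ _).symm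
  have hreal_iff : juliaSet P ⊆ Set.range Complex.ofReal ↔
      frontier (filledJuliaSet Q) ⊆ Set.range Complex.ofReal := by
    constructor
    · intro h x hx
      have hval : φ ((x - ((b:ℝ):ℂ))/(a:ℂ)) = x := by
        rw [hφ]
        field_simp
        ring
      have hx' : (x - ((b:ℝ):ℂ))/(a:ℂ) ∈ juliaSet P := by
        rw [hfront, Set.mem_preimage, hval]
        exact hx
      obtain ⟨r, hr⟩ := h hx'
      refine ⟨a*r + b, ?_⟩
      have : x = (a:ℂ)*((x - ((b:ℝ):ℂ))/(a:ℂ)) + ((b:ℝ):ℂ) := by field_simp; ring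
      rw [this, ← hr]
      push_cast
      ring
    · intro h z hz
      rw [hfront] at hz
      obtain ⟨r, hr⟩ := h hz
      refine ⟨(r - b)/a, ?_⟩
      have h1 : (a:ℂ)*z + ((b:ℝ):ℂ) = ((r:ℝ):ℂ) := hr.symm
      push_cast
      field_simp
      linear_combination -h1
  have hc14 : c ≤ 1/4 := by rw [hc, hb]; nlinarith [sq_nonneg (t+1)]
  have harith : ((0 < ω ∧ 2 ≤ a * ω) ∨ (ω < 0 ∧ 4 ≤ a * |ω|)) ↔ c ≤ -2 := by
    rw [hc, hb]
    constructor
    · rintro (⟨h1, h2⟩ | ⟨h1, h2⟩)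
      · rw [← ht] at h2; nlinarith
      · rw [abs_of_neg h1] at h2
        have h3 : t ≤ -4 := by rw [ht]; nlinarith
        nlinarith
    · intro h1
      rcases le_or_gt 2 t with h2 | h2
      · left
        have hω0 : 0 < ω := by
          rcases lt_trichotomy ω 0 with h | h | h
          · exfalso; rw [ht] at h2; nlinarith
          · exact absurd h hω
          · exact h
        exact ⟨hω0, by rw [← ht]; exact h2⟩
      · right
        have h3 : t ≤ -4 := by nlinarith
        have hω0 : ω < 0 := by
          rcases lt_trichotomy ω 0 with h | h | h
          · exact h
          · exact absurd h hω
          · exfalso; rw [ht] at h3; nlinarith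
        refine ⟨hω0, ?_⟩
        rw [abs_of_neg hω0]
        rw [ht] at h3
        nlinarith
  rw [hreal_iff]
  constructor
  · intro hJ
    by_contra hnot
    have hcgt : -2 < c := by
      by_contra hle
      push_neg at hle
      exact hnot (harith.mpr hle)
    obtain ⟨x, hxf, hxim⟩ := QJ.exists_nonreal_frontier hcgt hc14
    obtain ⟨r, hr⟩ := hJ hxf
    apply hxim
    rw [← hr]
    simp
  · intro hrhs
    have hcle : c ≤ -2 := harith.mp hrhs
    have hKreal : filledJuliaSet Q ⊆ Set.range Complex.ofReal := by
      intro z hz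
      have him : z.im = 0 := by
        rcases lt_or_eq_of_le hcle with h | h
        · exact QJ.im_eq_zero_of_bounded_orbit h hz
        · exact QJ.im_eq_zero_of_bounded_orbit_neg_two h hz
      exact ⟨z.re, by apply Complex.ext <;> simp [him]⟩
    intro x hx
    have hxcl : x ∈ closure (filledJuliaSet Q) := hx.1
    have h2 : x ∈ closure (Set.range Complex.ofReal) := closure_mono hKreal hxcl
    rwa [(QJ.isClosed_range_ofReal).closure_eq] at h2
end
end

section
/- Let f : (0,\infty) \to \mathbb{R} satisfy the renewal-type equation f(x) = \sum_{i=1}^m f(\gamma_i^2 x) + g(x) with 0 < \gamma_i < 1 and g bounded, and let d_S be the unique positive solution of \sum_{i=1}^m \gamma_i^{d_S} = 1. Then f(x) = O(x^{d_S/2} \log x) as x \to \infty provided f is bounded on bounded intervals. Moreover if additionally f is nonnegative and nondecreasing then f(x) = O(x^{d_S/2}). -/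
open Finset

set_option maxHeartbeats 4000000 in
/-- Growth bound for solutions of the renewal-type equation
`f(x) = ∑ i, f(γ_i² x) + g(x)` with `g` bounded: `f(x) = O(x^{d_S/2} log x)` if `f` is
bounded on bounded intervals, and `f(x) = O(x^{d_S/2})` if moreover `f` is nonnegative
and nondecreasing. -/
theorem renewal_growth_bound (m : ℕ) (hm : 2 ≤ m) (γ : Fin m → ℝ)
    (hγ : ∀ i, 0 < γ i ∧ γ i < 1)
    (f g : ℝ → ℝ)
    (hfg : ∀ x : ℝ, 0 < x → f x = (∑ i, f (γ i ^ 2 * x)) + g x)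
    (hgbd : ∃ C : ℝ, ∀ x : ℝ, 0 < x → |g x| ≤ C)
    (hvanish : ∃ t : ℝ, 0 < t ∧ ∀ x : ℝ, 0 < x → x < t → g x = 0 ∧ f x = 0)
    (hfloc : ∀ b : ℝ, 0 < b → ∃ C : ℝ, ∀ x ∈ Set.Ioc (0 : ℝ) b, |f x| ≤ C)
    (dS : ℝ) (hdS : 0 < dS) (hdSeq : ∑ i, γ i ^ dS = 1) :
    (∃ C : ℝ, 0 < C ∧ ∀ x : ℝ, 2 ≤ x → |f x| ≤ C * x ^ (dS / 2) * Real.log x) ∧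
    ((∀ x : ℝ, 0 < x → 0 ≤ f x) → (∀ x y : ℝ, 0 < x → x ≤ y → f x ≤ f y) →
      ∃ C : ℝ, 0 < C ∧ ∀ x : ℝ, 1 ≤ x → f x ≤ C * x ^ (dS / 2)) := by
  obtain ⟨G₀, hG₀⟩ := hgbd
  obtain ⟨G, hGdef⟩ : ∃ y : ℝ, y = max G₀ 0 := ⟨_, rfl⟩
  have hG : ∀ x : ℝ, 0 < x → |g x| ≤ G := fun x hx => (hG₀ x hx).trans (hGdef ▸ le_max_left _ _)
  have hG0 : 0 ≤ G := hGdef ▸ le_max_right _ _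
  obtain ⟨t, ht0, htv⟩ := hvanish
  -- min and max of γ
  haveI : Nonempty (Fin m) := ⟨⟨0, by omega⟩⟩
  have hne : (Finset.univ : Finset (Fin m)).Nonempty := Finset.univ_nonempty
  obtain ⟨i₀, -, hmin⟩ := Finset.exists_min_image Finset.univ γ hne
  obtain ⟨i₁, -, hmax⟩ := Finset.exists_max_image Finset.univ γ hne
  obtain ⟨a, hadef⟩ : ∃ y : ℝ, y = γ i₀ := ⟨_, rfl⟩
  obtain ⟨b, hbdef⟩ : ∃ y : ℝ, y = γ i₁ := ⟨_, rfl⟩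
  have ha0 : 0 < a := hadef ▸ (hγ i₀).1
  have ha1 : a < 1 := hadef ▸ (hγ i₀).2
  have hb0 : 0 < b := hbdef ▸ (hγ i₁).1
  have hb1 : b < 1 := hbdef ▸ (hγ i₁).2
  have hmin' : ∀ i, a ≤ γ i := fun i => hadef ▸ hmin i (Finset.mem_univ i)
  have hmax' : ∀ i, γ i ≤ b := fun i => hbdef ▸ hmax i (Finset.mem_univ i)
  obtain ⟨r, hrdef⟩ : ∃ y : ℝ, y = 1 / b ^ 2 := ⟨_, rfl⟩
  have hr1 : 1 < r := by
    rw [hrdef]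
    rw [lt_div_iff₀ (by positivity), one_mul]
    nlinarith
  have hbr : b ^ 2 * r = 1 := by
    rw [hrdef]; field_simp
  -- key rpow identity
  have key : ∀ (c x p : ℝ), 0 < c → 0 < x → (c ^ 2 * x) ^ p = c ^ (2 * p) * x ^ p := by
    intro c x p hc hx
    rw [Real.mul_rpow (by positivity) hx.le]
    congr 1
    rw [← Real.rpow_natCast c 2, ← Real.rpow_mul hc.le]
    norm_num
  -- key log identity
  have klog : ∀ (c x : ℝ), 0 < c → 0 < x →
      Real.log (c ^ 2 * x) = 2 * Real.log c + Real.log x := by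
    intro c x hc hx
    rw [Real.log_mul (by positivity) hx.ne', Real.log_pow]
    norm_num
  have hdS2 : (0:ℝ) < dS / 2 := by linarith
  -- PART 1
  constructor
  · obtain ⟨s, hsdef⟩ : ∃ y : ℝ, y = min t 1 / 2 := ⟨_, rfl⟩
    have hs0 : 0 < s := by rw [hsdef]; positivity
    have hst : s < t := by
      rw [hsdef]
      have : min t 1 ≤ t := min_le_left _ _
      linarith
    have hs1 : s ≤ 1 / 2 := by
      rw [hsdef]
      have : min t 1 ≤ 1 := min_le_right _ _
      linarith
    have hfzero : ∀ x : ℝ, 0 < x → x ≤ s → f x = 0 := fun x hx hxs =>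
      (htv x hx (lt_of_le_of_lt hxs hst)).2
    obtain ⟨D, hDdef⟩ : ∃ y : ℝ, y = -(2 * Real.log b) := ⟨_, rfl⟩
    have hD0 : 0 < D := by
      have : Real.log b < 0 := Real.log_neg hb0 hb1
      rw [hDdef]; linarith
    obtain ⟨A, hAdef⟩ : ∃ y : ℝ, y = -(Real.log (s * a ^ 2)) := ⟨_, rfl⟩
    have hsa1 : s * a ^ 2 < 1 := by nlinarith
    have hsa0 : 0 < s * a ^ 2 := by positivity
    have hA0 : 0 < A := by
      have : Real.log (s * a ^ 2) < 0 := Real.log_neg hsa0 hsa1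
      rw [hAdef]; linarith
    have hsp : 0 < s ^ (dS / 2) := Real.rpow_pos_of_pos hs0 _
    obtain ⟨C, hCdef⟩ : ∃ y : ℝ, y = G / (D * s ^ (dS / 2)) + 1 := ⟨_, rfl⟩
    have hC0 : 0 < C := by
      have : 0 ≤ G / (D * s ^ (dS / 2)) := by positivity
      rw [hCdef]; linarith
    have hCG : G ≤ C * D * s ^ (dS / 2) := by
      have hne' : D * s ^ (dS / 2) ≠ 0 := by positivity
      have h := div_mul_cancel₀ G hne'
      have he : C * D * s ^ (dS / 2) = G / (D * s ^ (dS / 2)) * (D * s ^ (dS / 2)) + D * s ^ (dS / 2) := by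
        rw [hCdef]; ring
      rw [he, h]
      nlinarith [mul_pos hD0 hsp]
    -- base case bound
    have base : ∀ x : ℝ, s * a ^ 2 ≤ x → x ≤ s →
        |f x| ≤ C * x ^ (dS / 2) * (A + Real.log x) := by
      intro x hx1 hx2
      have hx0 : 0 < x := lt_of_lt_of_le hsa0 hx1
      rw [hfzero x hx0 hx2, abs_zero]
      have hlog : Real.log (s * a ^ 2) ≤ Real.log x := Real.log_le_log hsa0 hx1
      have h1 : 0 ≤ A + Real.log x := by rw [hAdef]; linarith
      have h2 : 0 ≤ x ^ (dS / 2) := Real.rpow_nonneg hx0.le _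
      positivity
    -- main induction
    have main : ∀ n : ℕ, ∀ x : ℝ, s * a ^ 2 ≤ x → x ≤ s * r ^ n →
        |f x| ≤ C * x ^ (dS / 2) * (A + Real.log x) := by
      intro n
      induction n with
      | zero =>
        intro x hx1 hx2
        rw [pow_zero, mul_one] at hx2
        exact base x hx1 hx2
      | succ n ih =>
        intro x hx1 hx2
        by_cases hxs : x ≤ s
        · exact base x hx1 hxs
        push_neg at hxs
        have hx0 : 0 < x := lt_trans hs0 hxs
        -- per-term bound
        have hterm : ∀ i : Fin m, |f (γ i ^ 2 * x)| ≤
            C * (γ i ^ dS * x ^ (dS / 2)) * (A + Real.log x - D) := by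
          intro i
          have hγi0 := (hγ i).1
          have hai : a ≤ γ i := hmin' i
          have hbi : γ i ≤ b := hmax' i
          have hsq1 : a ^ 2 ≤ γ i ^ 2 := pow_le_pow_left₀ ha0.le hai 2
          have hsq2 : γ i ^ 2 ≤ b ^ 2 := pow_le_pow_left₀ hγi0.le hbi 2
          have h1 : s * a ^ 2 ≤ γ i ^ 2 * x := by nlinarith
          have h2 : γ i ^ 2 * x ≤ s * r ^ n := by
            calc γ i ^ 2 * x ≤ b ^ 2 * x := mul_le_mul_of_nonneg_right hsq2 hx0.le
              _ ≤ b ^ 2 * (s * r ^ (n + 1)) := mul_le_mul_of_nonneg_left hx2 (by positivity)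
              _ = s * r ^ n * (b ^ 2 * r) := by rw [pow_succ]; ring
              _ = s * r ^ n := by rw [hbr, mul_one]
          have hih := ih (γ i ^ 2 * x) h1 h2
          rw [key (γ i) x (dS / 2) hγi0 hx0, klog (γ i) x hγi0 hx0] at hih
          have hexp : 2 * (dS / 2) = dS := by ring
          rw [hexp] at hih
          refine hih.trans ?_
          have hlogγ : Real.log (γ i) ≤ Real.log b := Real.log_le_log hγi0 hbi
          have hcoef : 0 ≤ C * (γ i ^ dS * x ^ (dS / 2)) := by
            have := Real.rpow_nonneg hγi0.le dS
            have := Real.rpow_nonneg hx0.le (dS / 2)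
            positivity
          have : A + (2 * Real.log (γ i) + Real.log x) ≤ A + Real.log x - D := by
            rw [hDdef]; linarith
          nlinarith
        have habs : |f x| ≤ (∑ i, |f (γ i ^ 2 * x)|) + |g x| := by
          rw [hfg x hx0]
          exact (abs_add_le _ _).trans (add_le_add_left (Finset.abs_sum_le_sum_abs _ _) _)
        have hsum : (∑ i, |f (γ i ^ 2 * x)|) ≤
            (∑ i, C * (γ i ^ dS * x ^ (dS / 2)) * (A + Real.log x - D)) :=
          Finset.sum_le_sum fun i _ => hterm i
        have hsumeq : (∑ i, C * (γ i ^ dS * x ^ (dS / 2)) * (A + Real.log x - D)) =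
            C * x ^ (dS / 2) * (A + Real.log x - D) := by
          have e : ∀ i ∈ (Finset.univ : Finset (Fin m)),
              C * (γ i ^ dS * x ^ (dS / 2)) * (A + Real.log x - D) =
              γ i ^ dS * (C * x ^ (dS / 2) * (A + Real.log x - D)) := fun i _ => by ring
          rw [Finset.sum_congr rfl e, ← Finset.sum_mul, hdSeq, one_mul]
        have hgx : |g x| ≤ G := hG x hx0
        have hxp : s ^ (dS / 2) ≤ x ^ (dS / 2) :=
          Real.rpow_le_rpow hs0.le hxs.le hdS2.le
        have hfin : C * x ^ (dS / 2) * (A + Real.log x - D) + G ≤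
            C * x ^ (dS / 2) * (A + Real.log x) := by
          have h3 : G ≤ C * D * x ^ (dS / 2) := by nlinarith
          nlinarith
        calc |f x| ≤ (∑ i, |f (γ i ^ 2 * x)|) + |g x| := habs
          _ ≤ C * x ^ (dS / 2) * (A + Real.log x - D) + G := by
              rw [← hsumeq]; exact add_le_add hsum hgx
          _ ≤ C * x ^ (dS / 2) * (A + Real.log x) := hfin
    -- conclusion of part 1
    have hlog2 : 0 < Real.log 2 := Real.log_pos one_lt_two
    refine ⟨C * (A / Real.log 2 + 1), ?_, ?_⟩
    · have : 0 < A / Real.log 2 + 1 := by positivity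
      positivity
    intro x hx2
    have hx0 : (0:ℝ) < x := by linarith
    obtain ⟨n, hn⟩ := pow_unbounded_of_one_lt (x / s) hr1
    have hxn : x ≤ s * r ^ n := by
      rw [div_lt_iff₀ hs0] at hn
      nlinarith
    have hxlow : s * a ^ 2 ≤ x := by nlinarith
    have hmain := main n x hxlow hxn
    have hlogx : Real.log 2 ≤ Real.log x := Real.log_le_log (by norm_num) hx2
    have hAle : A + Real.log x ≤ (A / Real.log 2 + 1) * Real.log x := by
      have hA' : A = A / Real.log 2 * Real.log 2 := by field_simp
      have h1 : 0 ≤ A / Real.log 2 := by positivity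
      nlinarith
    have hxp : 0 ≤ x ^ (dS / 2) := Real.rpow_nonneg hx0.le _
    calc |f x| ≤ C * x ^ (dS / 2) * (A + Real.log x) := hmain
      _ ≤ C * x ^ (dS / 2) * ((A / Real.log 2 + 1) * Real.log x) := by
          have : 0 ≤ C * x ^ (dS / 2) := by positivity
          nlinarith
      _ = C * (A / Real.log 2 + 1) * x ^ (dS / 2) * Real.log x := by ring
  -- PART 2
  · intro hnn hmono
    obtain ⟨R, hRdef⟩ : ∃ y : ℝ, y = 1 / a ^ 2 := ⟨_, rfl⟩
    have hR0 : 0 < R := by rw [hRdef]; positivity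
    have hR1 : 1 ≤ R := by
      rw [hRdef, le_div_iff₀ (by positivity), one_mul]
      nlinarith
    have haR : a ^ 2 * R = 1 := by rw [hRdef]; field_simp
    obtain ⟨σ, hσdef⟩ : ∃ y : ℝ, y = ∑ i, γ i ^ (dS / 2) := ⟨_, rfl⟩
    have hσ1 : 1 < σ := by
      rw [hσdef, ← hdSeq]
      apply Finset.sum_lt_sum_of_nonempty hne
      intro i _
      exact Real.rpow_lt_rpow_of_exponent_gt (hγ i).1 (hγ i).2 (by linarith)
    have hfR0 : 0 ≤ f R := hnn R hR0
    obtain ⟨C₂, hC₂def⟩ : ∃ y : ℝ, y = max (2 * f R) (2 * G / (σ - 1)) + 1 := ⟨_, rfl⟩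
    have hC₂0 : 0 < C₂ := by
      have h1 : 0 ≤ 2 * f R := by linarith
      have : (0:ℝ) ≤ max (2 * f R) (2 * G / (σ - 1)) := le_trans h1 (le_max_left _ _)
      rw [hC₂def]; linarith
    have hC₂fR : 2 * f R ≤ C₂ := by
      have := le_max_left (2 * f R) (2 * G / (σ - 1))
      rw [hC₂def]; linarith
    have hC₂G : 2 * G ≤ C₂ * (σ - 1) := by
      have h1 : 2 * G / (σ - 1) ≤ C₂ := by
        have := le_max_right (2 * f R) (2 * G / (σ - 1))
        rw [hC₂def]; linarith
      have h2 : (0:ℝ) < σ - 1 := by linarith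
      calc 2 * G = 2 * G / (σ - 1) * (σ - 1) := by field_simp
        _ ≤ C₂ * (σ - 1) := by nlinarith
    -- base
    have base2 : ∀ x : ℝ, 1 ≤ x → x ≤ R →
        f x ≤ C₂ * (x ^ (dS / 2) - x ^ (dS / 4) / 2) := by
      intro x hx1 hxR
      have hx0 : (0:ℝ) < x := by linarith
      have h1 : f x ≤ f R := hmono x R hx0 hxR
      have h2 : x ^ (dS / 4) ≤ x ^ (dS / 2) :=
        Real.rpow_le_rpow_of_exponent_le hx1 (by linarith)
      have h3 : (1:ℝ) ≤ x ^ (dS / 4) := by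
        have := Real.rpow_le_rpow_of_exponent_le hx1 (show (0:ℝ) ≤ dS / 4 by linarith)
        rwa [Real.rpow_zero] at this
      have h4 : (1:ℝ) / 2 ≤ x ^ (dS / 2) - x ^ (dS / 4) / 2 := by linarith
      nlinarith [mul_nonneg hC₂0.le (show (0:ℝ) ≤ x ^ (dS / 2) - x ^ (dS / 4) / 2 - 1 / 2 by linarith)]
    -- main induction
    have main2 : ∀ n : ℕ, ∀ x : ℝ, 1 ≤ x → x ≤ R * r ^ n →
        f x ≤ C₂ * (x ^ (dS / 2) - x ^ (dS / 4) / 2) := by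
      intro n
      induction n with
      | zero =>
        intro x hx1 hx2
        rw [pow_zero, mul_one] at hx2
        exact base2 x hx1 hx2
      | succ n ih =>
        intro x hx1 hx2
        by_cases hxR : x ≤ R
        · exact base2 x hx1 hxR
        push_neg at hxR
        have hx0 : (0:ℝ) < x := by linarith
        have hterm : ∀ i : Fin m, f (γ i ^ 2 * x) ≤
            C₂ * (γ i ^ dS * x ^ (dS / 2) - γ i ^ (dS / 2) * x ^ (dS / 4) / 2) := by
          intro i
          have hγi0 := (hγ i).1
          have hsq1 : a ^ 2 ≤ γ i ^ 2 := pow_le_pow_left₀ ha0.le (hmin' i) 2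
          have hsq2 : γ i ^ 2 ≤ b ^ 2 := pow_le_pow_left₀ hγi0.le (hmax' i) 2
          have h1 : 1 ≤ γ i ^ 2 * x := by nlinarith
          have h2 : γ i ^ 2 * x ≤ R * r ^ n := by
            calc γ i ^ 2 * x ≤ b ^ 2 * x := mul_le_mul_of_nonneg_right hsq2 hx0.le
              _ ≤ b ^ 2 * (R * r ^ (n + 1)) := mul_le_mul_of_nonneg_left hx2 (by positivity)
              _ = R * r ^ n * (b ^ 2 * r) := by rw [pow_succ]; ring
              _ = R * r ^ n := by rw [hbr, mul_one]
          have hih := ih (γ i ^ 2 * x) h1 h2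
          rw [key (γ i) x (dS / 2) hγi0 hx0, key (γ i) x (dS / 4) hγi0 hx0] at hih
          have e1 : 2 * (dS / 2) = dS := by ring
          have e2 : 2 * (dS / 4) = dS / 2 := by ring
          rw [e1, e2] at hih
          exact hih
        have hsum : (∑ i, f (γ i ^ 2 * x)) ≤
            ∑ i, C₂ * (γ i ^ dS * x ^ (dS / 2) - γ i ^ (dS / 2) * x ^ (dS / 4) / 2) :=
          Finset.sum_le_sum fun i _ => hterm i
        have hsumeq : (∑ i, C₂ * (γ i ^ dS * x ^ (dS / 2) - γ i ^ (dS / 2) * x ^ (dS / 4) / 2)) =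
            C₂ * x ^ (dS / 2) - C₂ * σ * x ^ (dS / 4) / 2 := by
          have e : ∀ i ∈ (Finset.univ : Finset (Fin m)),
              C₂ * (γ i ^ dS * x ^ (dS / 2) - γ i ^ (dS / 2) * x ^ (dS / 4) / 2) =
              γ i ^ dS * (C₂ * x ^ (dS / 2)) - γ i ^ (dS / 2) * (C₂ * x ^ (dS / 4) / 2) :=
            fun i _ => by ring
          rw [Finset.sum_congr rfl e, Finset.sum_sub_distrib, ← Finset.sum_mul, ← Finset.sum_mul,
            hdSeq, ← hσdef, one_mul]
          ring
        have hgx : g x ≤ G := (le_abs_self _).trans (hG x hx0)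
        have hX : (1:ℝ) ≤ x ^ (dS / 4) := by
          have := Real.rpow_le_rpow_of_exponent_le hx1 (show (0:ℝ) ≤ dS / 4 by linarith)
          rwa [Real.rpow_zero] at this
        have hfin : C₂ * x ^ (dS / 2) - C₂ * σ * x ^ (dS / 4) / 2 + G ≤
            C₂ * (x ^ (dS / 2) - x ^ (dS / 4) / 2) := by
          have h5 : 0 ≤ C₂ * (σ - 1) := by nlinarith
          nlinarith [mul_le_mul_of_nonneg_left hX h5]
        calc f x = (∑ i, f (γ i ^ 2 * x)) + g x := hfg x hx0
          _ ≤ (C₂ * x ^ (dS / 2) - C₂ * σ * x ^ (dS / 4) / 2) + G := by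
              rw [← hsumeq]; exact add_le_add hsum hgx
          _ ≤ C₂ * (x ^ (dS / 2) - x ^ (dS / 4) / 2) := hfin
    refine ⟨C₂, hC₂0, ?_⟩
    intro x hx1
    have hx0 : (0:ℝ) < x := by linarith
    obtain ⟨n, hn⟩ := pow_unbounded_of_one_lt (x / R) hr1
    have hxn : x ≤ R * r ^ n := by
      rw [div_lt_iff₀ hR0] at hn
      nlinarith
    have := main2 n x hx1 hxn
    have hxq : 0 ≤ x ^ (dS / 4) := Real.rpow_nonneg hx0.le _
    nlinarith
end
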